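/- If K is an n×n Hermitian positive semidefinite complex matrix and M, N are Hermitian matrices with 0 ⪯ M ⪯ N (N − M positive semidefinite), then det(I + K·M) ≤ det(I + K·N). -/

import Mathlib

open Matrix
open scoped ComplexOrder

open scoped MatrixOrder in
noncomputable def Matrix.PosSemidef.sqrt {m : ℕ} {A : Matrix (Fin m) (Fin m) ℂ}
    (_hA : A.PosSemidef) : Matrix (Fin m) (Fin m) ℂ := CFC.sqrt A

open scoped MatrixOrder in
lemma Matrix.PosSemidef.sqrt_mul_self {m : ℕ} {A : Matrix (Fin m) (Fin m) ℂ}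
    (hA : A.PosSemidef) : hA.sqrt * hA.sqrt = A :=
  CFC.sqrt_mul_sqrt_self A hA.nonneg

open scoped MatrixOrder in
lemma Matrix.PosSemidef.posSemidef_sqrt {m : ℕ} {A : Matrix (Fin m) (Fin m) ℂ}
    (hA : A.PosSemidef) : hA.sqrt.PosSemidef :=
  (CFC.sqrt_nonneg A).posSemidef

/-- det of one plus PSD is at least one. -/
lemma aux_one_le_det_one_add {m : ℕ} {C : Matrix (Fin m) (Fin m) ℂ}
    (hC : C.PosSemidef) : (1 : ℂ) ≤ (1 + C).det := by
  have hB : (1 + C).PosSemidef := Matrix.PosSemidef.one.add hC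
  have hH := hB.isHermitian
  rw [hH.det_eq_prod_eigenvalues]
  have h1 : ∀ i, (1 : ℝ) ≤ hH.eigenvalues i := by
    intro i
    rw [hH.eigenvalues_eq]
    set x := (hH.eigenvectorBasis i : EuclideanSpace ℂ (Fin m))
    have hx : dotProduct (star ⇑x) ((1 + C) *ᵥ ⇑x)
        = dotProduct (star ⇑x) ⇑x + dotProduct (star ⇑x) (C *ᵥ ⇑x) := by
      rw [add_mulVec, one_mulVec, dotProduct_add]
    rw [hx, map_add]
    have hxnorm : RCLike.re (dotProduct (star ⇑x) ⇑x) = 1 := by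
      have := hH.eigenvectorBasis.orthonormal.1 i
      rw [dotProduct_comm, ← EuclideanSpace.inner_eq_star_dotProduct, inner_self_eq_norm_sq_to_K]
      simp [x, this]
    rw [hxnorm]
    have := hC.re_dotProduct_nonneg ⇑x
    linarith
  have hr : (1 : ℝ) ≤ ∏ i, hH.eigenvalues i := by
    calc (1:ℝ) = ∏ _i : Fin m, (1:ℝ) := by simp
      _ ≤ ∏ i, hH.eigenvalues i :=
        Finset.prod_le_prod (by intros; norm_num) (fun i _ => h1 i)
  have : ((1:ℝ):ℂ) ≤ ((∏ i, hH.eigenvalues i : ℝ) : ℂ) := Complex.real_le_real.mpr hr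
  simpa using this

/-- det monotone: PosDef R, PSD P ⇒ det R ≤ det (R + P). -/
lemma aux_det_le_det_add {m : ℕ} {R P : Matrix (Fin m) (Fin m) ℂ}
    (hR : R.PosDef) (hP : P.PosSemidef) : R.det ≤ (R + P).det := by
  set T := hR.posSemidef.sqrt with hTdef
  have hTT : T * T = R := hR.posSemidef.sqrt_mul_self
  have hTpsd : T.PosSemidef := hR.posSemidef.posSemidef_sqrt
  have hTdet : IsUnit T.det := by
    have h2 : T.det * T.det = R.det := by rw [← det_mul, hTT]
    have : R.det ≠ 0 := hR.det_pos.ne'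
    exact isUnit_iff_ne_zero.mpr (fun h => this (by rw [← h2, h, zero_mul]))
  have hTinv : T * T⁻¹ = 1 := mul_nonsing_inv T hTdet
  have hTinv' : T⁻¹ * T = 1 := nonsing_inv_mul T hTdet
  have hTH : Tᴴ = T := hTpsd.isHermitian
  have hC : (T⁻¹ * P * T⁻¹).PosSemidef := by
    have := hP.conjTranspose_mul_mul_same T⁻¹
    rwa [conjTranspose_nonsing_inv, hTH] at this
  have key : R + P = T * (1 + T⁻¹ * P * T⁻¹) * T := by
    rw [Matrix.mul_add, Matrix.add_mul, Matrix.mul_one, hTT]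
    congr 1
    rw [← Matrix.mul_assoc, ← Matrix.mul_assoc, hTinv, Matrix.one_mul,
      Matrix.mul_assoc, hTinv', Matrix.mul_one]
  rw [key, det_mul, det_mul, mul_comm T.det, mul_assoc, ← det_mul, hTT]
  exact le_mul_of_one_le_left hR.det_pos.le (aux_one_le_det_one_add hC)

/-- If `K ⪰ 0` and `0 ⪯ M ⪯ N` (all Hermitian), then
`det (I + K M) ≤ det (I + K N)`. -/
theorem stmt_13 (n : ℕ) (K M N : Matrix (Fin n) (Fin n) ℂ)
    (hK : K.PosSemidef) (hM : M.PosSemidef) (hN : N.IsHermitian)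
    (hMN : (N - M).PosSemidef) :
    (1 + K * M).det ≤ (1 + K * N).det := by
  set S := hK.sqrt with hSdef
  have hSS : S * S = K := hK.sqrt_mul_self
  have hSH : Sᴴ = S := hK.posSemidef_sqrt.isHermitian
  have hswap : ∀ X : Matrix (Fin n) (Fin n) ℂ, (1 + K * X).det = (1 + S * X * S).det := by
    intro X
    rw [← hSS, Matrix.mul_assoc, det_one_add_mul_comm, Matrix.mul_assoc]
  rw [hswap M, hswap N]
  have hA : (S * M * S).PosSemidef := by
    have := hM.mul_mul_conjTranspose_same S
    rwa [hSH] at this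
  have hP : (S * (N - M) * S).PosSemidef := by
    have := hMN.mul_mul_conjTranspose_same S
    rwa [hSH] at this
  have h1A : (1 + S * M * S).PosDef := Matrix.PosDef.one.add_posSemidef hA
  have := aux_det_le_det_add h1A hP
  have heq : 1 + S * M * S + S * (N - M) * S = 1 + S * N * S := by
    rw [Matrix.mul_sub, Matrix.sub_mul]
    abel
  rwa [heq] at this
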